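/- For every ε > 0 and d ≥ 2, the kernel K(q, k) = (⟨q,k⟩)²/((2+ε) - 2⟨q,k⟩) is positive semidefinite on the unit sphere S^{d-1}. -/

import Mathlib

def IsPSDKernel {X : Type*} (k : X → X → ℝ) : Prop :=
  ∀ (n : ℕ) (x : Fin n → X) (c : Fin n → ℝ),
    0 ≤ ∑ i, ∑ j, c i * c j * k (x i) (x j)

open Finset in
lemma gram_pow_nonneg {n d : ℕ} (m : ℕ) (u : Fin n → Fin d → ℝ) (c : Fin n → ℝ) :
    0 ≤ ∑ i, ∑ j, c i * c j * (∑ a, u i a * u j a) ^ m := by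
  classical
  set F := Fintype.piFinset (fun _ : Fin m => (univ : Finset (Fin d))) with hF
  set A : Fin n → (Fin m → Fin d) → ℝ := fun i f => ∏ l, u i (f l) with hA
  have hexp : ∀ i j : Fin n, (∑ a, u i a * u j a) ^ m = ∑ f ∈ F, A i f * A j f := by
    intro i j
    rw [← Fin.prod_const m, Finset.prod_univ_sum]
    exact Finset.sum_congr rfl fun f _ => Finset.prod_mul_distrib
  have key : (∑ i, ∑ j, c i * c j * (∑ a, u i a * u j a) ^ m) =
      ∑ f ∈ F, (∑ i, c i * A i f) ^ 2 := by
    calc ∑ i, ∑ j, c i * c j * (∑ a, u i a * u j a) ^ m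
        = ∑ i, ∑ j, ∑ f ∈ F, (c i * A i f) * (c j * A j f) := by
          refine Finset.sum_congr rfl fun i _ => Finset.sum_congr rfl fun j _ => ?_
          rw [hexp i j, Finset.mul_sum]
          exact Finset.sum_congr rfl fun f _ => by ring
      _ = ∑ i, ∑ f ∈ F, ∑ j, (c i * A i f) * (c j * A j f) :=
          Finset.sum_congr rfl fun i _ => Finset.sum_comm
      _ = ∑ f ∈ F, ∑ i, ∑ j, (c i * A i f) * (c j * A j f) := Finset.sum_comm
      _ = ∑ f ∈ F, (∑ i, c i * A i f) ^ 2 := by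
          refine Finset.sum_congr rfl fun f _ => ?_
          rw [sq, Finset.sum_mul_sum]
  rw [key]
  exact Finset.sum_nonneg fun f _ => sq_nonneg _

lemma inner_pow_nonneg {d : ℕ} {n : ℕ} (m : ℕ)
    (x : Fin n → EuclideanSpace ℝ (Fin d)) (c : Fin n → ℝ) :
    0 ≤ ∑ i, ∑ j, c i * c j * (inner ℝ (x i) (x j) : ℝ) ^ m := by
  have h : ∀ i j : Fin n, (inner ℝ (x i) (x j) : ℝ) = ∑ a, x i a * x j a := by
    intro i j
    rw [PiLp.inner_apply]
    exact Finset.sum_congr rfl fun a _ => by simp [mul_comm]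
  simp only [h]
  exact gram_pow_nonneg m (fun i a => x i a) c

theorem psd_spherical_E_product (d : ℕ) (hd : 2 ≤ d) (ε : ℝ) (hε : 0 < ε) :
    IsPSDKernel (fun q k : Metric.sphere (0 : EuclideanSpace ℝ (Fin d)) 1 =>
      (inner ℝ (q : EuclideanSpace ℝ (Fin d)) (k : EuclideanSpace ℝ (Fin d)) : ℝ) ^ 2 /
        ((2 + ε) -
          2 * (inner ℝ (q : EuclideanSpace ℝ (Fin d)) (k : EuclideanSpace ℝ (Fin d)) : ℝ))) := by
  intro n x c
  set C : ℝ := 2 + ε with hCdef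
  have hC2 : (2 : ℝ) < C := by simp [hCdef]; linarith
  have hC0 : (0 : ℝ) < C := by linarith
  set t : Fin n → Fin n → ℝ := fun i j =>
    (inner ℝ ((x i : EuclideanSpace ℝ (Fin d))) ((x j : EuclideanSpace ℝ (Fin d))) : ℝ) with htdef
  have ht1 : ∀ i j, |t i j| ≤ 1 := by
    intro i j
    have h1 : ‖(x i : EuclideanSpace ℝ (Fin d))‖ = 1 := by
      have := (x i).2; rwa [mem_sphere_zero_iff_norm] at this
    have h2 : ‖(x j : EuclideanSpace ℝ (Fin d))‖ = 1 := by
      have := (x j).2; rwa [mem_sphere_zero_iff_norm] at this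
    calc |t i j| ≤ ‖(x i : EuclideanSpace ℝ (Fin d))‖ * ‖(x j : EuclideanSpace ℝ (Fin d))‖ :=
          abs_real_inner_le_norm _ _
      _ = 1 := by rw [h1, h2, mul_one]
  have hr : ∀ i j, ‖2 * t i j / C‖ < 1 := by
    intro i j
    rw [Real.norm_eq_abs, abs_div, abs_of_pos hC0, div_lt_one hC0, abs_mul, abs_two]
    calc 2 * |t i j| ≤ 2 * 1 := by nlinarith [ht1 i j]
      _ < C := by linarith
  have hsummable : ∀ i j, Summable (fun m : ℕ =>
      c i * c j * (t i j ^ 2 / C * (2 * t i j / C) ^ m)) := by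
    intro i j
    exact ((summable_geometric_of_norm_lt_one (hr i j)).mul_left _).mul_left _
  have hpt : ∀ i j, c i * c j * (t i j ^ 2 / (C - 2 * t i j)) =
      ∑' m : ℕ, c i * c j * (t i j ^ 2 / C * (2 * t i j / C) ^ m) := by
    intro i j
    have hpos : 0 < C - 2 * t i j := by
      have h := le_of_abs_le (ht1 i j)
      linarith
    have hgeo : ∑' m : ℕ, (2 * t i j / C) ^ m = (1 - 2 * t i j / C)⁻¹ :=
      tsum_geometric_of_norm_lt_one (hr i j)
    have h1 : (1 : ℝ) - 2 * t i j / C ≠ 0 := by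
      have hCt : C - 2 * t i j = C * (1 - 2 * t i j / C) := by field_simp
      intro h
      rw [hCt, h, mul_zero] at hpos
      exact lt_irrefl 0 hpos
    rw [tsum_mul_left, tsum_mul_left, hgeo]
    rw [eq_comm]
    field_simp
  calc (0:ℝ) ≤ ∑' m : ℕ, ∑ i, ∑ j,
        c i * c j * (t i j ^ 2 / C * (2 * t i j / C) ^ m) := by
        apply tsum_nonneg
        intro m
        have hform : ∀ i j : Fin n, c i * c j * (t i j ^ 2 / C * (2 * t i j / C) ^ m) =
            2 ^ m / C ^ (m + 1) * (c i * c j * t i j ^ (m + 2)) := by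
          intro i j
          rw [div_pow, mul_pow]
          field_simp
          ring
        simp only [hform, ← Finset.mul_sum]
        apply mul_nonneg
        · positivity
        · exact inner_pow_nonneg (m + 2) (fun i => (x i : EuclideanSpace ℝ (Fin d))) c
    _ = ∑ i, ∑ j, c i * c j * (t i j ^ 2 / (C - 2 * t i j)) := by
        rw [Summable.tsum_finsetSum fun i _ => summable_sum fun j _ => hsummable i j]
        refine Finset.sum_congr rfl fun i _ => ?_
        rw [Summable.tsum_finsetSum fun j _ => hsummable i j]
        exact Finset.sum_congr rfl fun j _ => (hpt i j).symm
    _ = ∑ i, ∑ j, c i * c j *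
          ((inner ℝ ((x i : EuclideanSpace ℝ (Fin d))) ((x j : EuclideanSpace ℝ (Fin d))) : ℝ) ^ 2 /
            ((2 + ε) - 2 * (inner ℝ ((x i : EuclideanSpace ℝ (Fin d)))
              ((x j : EuclideanSpace ℝ (Fin d))) : ℝ))) := rfl
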